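/- (One-step tracking consensus recursion.) Let m, d ≥ 1; for j = 1,…,m let f_j : ℝ^d → ℝ be differentiable with L_j-Lipschitz gradient and set L_mx := max_j L_j. Let W = (w_ij) be an m×m doubly stochastic matrix with nonnegative entries, and set ρ := ‖W − (1/m)𝟙𝟙ᵀ‖₂ (ℓ₂ operator norm). Let x_1,…,x_m, x_1^{1/2},…,x_m^{1/2}, y_1,…,y_m ∈ ℝ^d, and define x_i⁺ := ∑_{j=1}^m w_ij x_j^{1/2} and y_i⁺ := ∑_{j=1}^m w_ij ( y_j + ∇f_j(x_j⁺) − ∇f_j(x_j) ). With x̄ := (1/m)∑_i x_i, ȳ := (1/m)∑_i y_i, ȳ⁺ := (1/m)∑_i y_i⁺, it holds that (∑_{i=1}^m ‖y_i⁺ − ȳ⁺‖²)^{1/2} ≤ ρ·(∑_{i=1}^m ‖y_i − ȳ‖²)^{1/2} + 2·ρ·L_mx·(∑_{i=1}^m ‖x_i − x̄‖²)^{1/2} + ρ·L_mx·(∑_{i=1}^m ‖x_i^{1/2} − x_i‖²)^{1/2}. -/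

import Mathlib

open Finset Matrix

noncomputable def sqN {m d : ℕ} (u : Fin m → EuclideanSpace ℝ (Fin d)) : ℝ :=
  Real.sqrt (∑ i, ‖u i‖ ^ 2)

lemma sqN_nonneg {m d : ℕ} (u : Fin m → EuclideanSpace ℝ (Fin d)) : 0 ≤ sqN u :=
  Real.sqrt_nonneg _

lemma sqN_le_of_sq_le_sq {m d : ℕ} (u v : Fin m → EuclideanSpace ℝ (Fin d)) (c : ℝ)
    (hc : 0 ≤ c) (h : ∑ i, ‖u i‖ ^ 2 ≤ c ^ 2 * ∑ i, ‖v i‖ ^ 2) : sqN u ≤ c * sqN v := by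
  have := Real.sqrt_le_sqrt h
  rw [sqN, sqN]
  calc Real.sqrt (∑ i, ‖u i‖ ^ 2) ≤ Real.sqrt (c ^ 2 * ∑ i, ‖v i‖ ^ 2) := this
    _ = c * Real.sqrt (∑ i, ‖v i‖ ^ 2) := by
        rw [Real.sqrt_mul (sq_nonneg c), Real.sqrt_sq hc]

lemma sqN_add {m d : ℕ} (u v : Fin m → EuclideanSpace ℝ (Fin d)) :
    sqN (fun i => u i + v i) ≤ sqN u + sqN v := by
  set a : EuclideanSpace ℝ (Fin m) := WithLp.toLp 2 (fun i => ‖u i‖) with ha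
  set b : EuclideanSpace ℝ (Fin m) := WithLp.toLp 2 (fun i => ‖v i‖) with hb
  have h1 : sqN (fun i => u i + v i) ≤ ‖a + b‖ := by
    rw [EuclideanSpace.norm_eq]
    apply Real.sqrt_le_sqrt
    apply Finset.sum_le_sum
    intro i _
    have hab : (a + b) i = ‖u i‖ + ‖v i‖ := rfl
    rw [hab]
    have h2 : ‖u i + v i‖ ≤ ‖u i‖ + ‖v i‖ := norm_add_le _ _
    have h3 : ‖(‖u i‖ + ‖v i‖ : ℝ)‖ = ‖u i‖ + ‖v i‖ :=
      Real.norm_of_nonneg (by positivity)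
    rw [h3]
    exact pow_le_pow_left₀ (norm_nonneg _) h2 2
  have h2 : ‖a‖ = sqN u := by
    rw [EuclideanSpace.norm_eq]
    congr 1; apply Finset.sum_congr rfl; intro i _
    rw [ha]; simp [Real.norm_of_nonneg (norm_nonneg (u i))]
  have h3 : ‖b‖ = sqN v := by
    rw [EuclideanSpace.norm_eq]
    congr 1; apply Finset.sum_congr rfl; intro i _
    rw [hb]; simp [Real.norm_of_nonneg (norm_nonneg (v i))]
  calc sqN (fun i => u i + v i) ≤ ‖a + b‖ := h1
    _ ≤ ‖a‖ + ‖b‖ := norm_add_le _ _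
    _ = sqN u + sqN v := by rw [h2, h3]

lemma sqN_neg {m d : ℕ} (u : Fin m → EuclideanSpace ℝ (Fin d)) :
    sqN (fun i => -u i) = sqN u := by
  unfold sqN; congr 1; exact Finset.sum_congr rfl fun i _ => by rw [norm_neg]

lemma euc_normsq {d : ℕ} (x : EuclideanSpace ℝ (Fin d)) : ‖x‖ ^ 2 = ∑ k, (x k) ^ 2 := by
  rw [EuclideanSpace.norm_eq, Real.sq_sqrt (by positivity)]
  simp [sq_abs]

lemma sum_smul_apply {m d : ℕ} (c : Fin m → ℝ) (u : Fin m → EuclideanSpace ℝ (Fin d)) (k : Fin d) :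
    (∑ j, c j • u j) k = ∑ j, c j * u j k := by
  induction (Finset.univ : Finset (Fin m)) using Finset.induction with
  | empty => rfl
  | insert _ _ h ih => rw [Finset.sum_insert h, Finset.sum_insert h, ← ih]; rfl

lemma clm_apply_coord (m : ℕ) (A : Matrix (Fin m) (Fin m) ℝ) (v : EuclideanSpace ℝ (Fin m))
    (i : Fin m) : (Matrix.toEuclideanCLM (𝕜 := ℝ) A v) i = ∑ j, A i j * v j := by
  have h := Matrix.ofLp_toEuclideanCLM (𝕜 := ℝ) A v
  have h2 : (Matrix.toEuclideanCLM (𝕜 := ℝ) A v) i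
      = (Matrix.toLin' A (WithLp.equiv _ _ v)) i := by rw [Matrix.toLin'_apply]; exact congrFun h i
  rw [h2, Matrix.toLin'_apply, Matrix.mulVec, dotProduct]; rfl

lemma sqN_opNorm {m d : ℕ} (A : Matrix (Fin m) (Fin m) ℝ)
    (u : Fin m → EuclideanSpace ℝ (Fin d)) :
    sqN (fun i => ∑ j, A i j • u j) ≤ ‖Matrix.toEuclideanCLM (𝕜 := ℝ) A‖ * sqN u := by
  apply sqN_le_of_sq_le_sq _ _ _ (norm_nonneg _)
  calc ∑ i, ‖∑ j, A i j • u j‖ ^ 2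
      = ∑ i, ∑ k, ((∑ j, A i j • u j) k) ^ 2 :=
        Finset.sum_congr rfl fun i _ => euc_normsq _
    _ = ∑ k, ∑ i, (∑ j, A i j * u j k) ^ 2 := by
        rw [Finset.sum_comm]
        exact Finset.sum_congr rfl fun k _ => Finset.sum_congr rfl fun i _ => by
          rw [sum_smul_apply]
    _ ≤ ∑ k : Fin d, ‖Matrix.toEuclideanCLM (𝕜 := ℝ) A‖ ^ 2 * ∑ j, (u j k) ^ 2 := by
        apply Finset.sum_le_sum
        intro k _
        set vk : EuclideanSpace ℝ (Fin m) := WithLp.toLp 2 (fun j => u j k) with hvk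
        have h1 : ∑ i, (∑ j, A i j * u j k) ^ 2
            = ‖Matrix.toEuclideanCLM (𝕜 := ℝ) A vk‖ ^ 2 := by
          rw [euc_normsq]
          exact Finset.sum_congr rfl fun i _ => by rw [clm_apply_coord]
        have h2 : ‖Matrix.toEuclideanCLM (𝕜 := ℝ) A vk‖
            ≤ ‖Matrix.toEuclideanCLM (𝕜 := ℝ) A‖ * ‖vk‖ :=
          ContinuousLinearMap.le_opNorm _ _
        have h3 : ‖vk‖ ^ 2 = ∑ j, (u j k) ^ 2 := by rw [euc_normsq]
        rw [h1, ← h3, ← mul_pow]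
        exact pow_le_pow_left₀ (norm_nonneg _) h2 2
    _ = ‖Matrix.toEuclideanCLM (𝕜 := ℝ) A‖ ^ 2 * ∑ j, ‖u j‖ ^ 2 := by
        rw [← Finset.mul_sum, Finset.sum_comm]
        congr 1
        exact Finset.sum_congr rfl fun j _ => (euc_normsq _).symm

lemma sqN_stoch {m d : ℕ} (W : Matrix (Fin m) (Fin m) ℝ)
    (hWnn : ∀ i j, 0 ≤ W i j) (hWrow : ∀ i, ∑ j, W i j = 1) (hWcol : ∀ j, ∑ i, W i j = 1)
    (u : Fin m → EuclideanSpace ℝ (Fin d)) :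
    sqN (fun i => ∑ j, W i j • u j) ≤ sqN u := by
  have key : ∑ i, ‖∑ j, W i j • u j‖ ^ 2 ≤ ∑ j, ‖u j‖ ^ 2 := by
    have step1 : ∀ i, ‖∑ j, W i j • u j‖ ^ 2 ≤ ∑ j, W i j * ‖u j‖ ^ 2 := by
      intro i
      have h1 : ‖∑ j, W i j • u j‖ ≤ ∑ j, W i j * ‖u j‖ := by
        refine (norm_sum_le _ _).trans (le_of_eq ?_)
        exact Finset.sum_congr rfl fun j _ => by
          rw [norm_smul, Real.norm_of_nonneg (hWnn i j)]
      have h2 : (∑ j, W i j * ‖u j‖) ^ 2 ≤ (∑ j, W i j) * ∑ j, W i j * ‖u j‖ ^ 2 :=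
        Finset.sum_sq_le_sum_mul_sum_of_sq_eq_mul _
          (fun j _ => hWnn i j) (fun j _ => mul_nonneg (hWnn i j) (sq_nonneg _))
          (fun j _ => by ring)
      calc ‖∑ j, W i j • u j‖ ^ 2 ≤ (∑ j, W i j * ‖u j‖) ^ 2 :=
            pow_le_pow_left₀ (norm_nonneg _) h1 2
        _ ≤ (∑ j, W i j) * ∑ j, W i j * ‖u j‖ ^ 2 := h2
        _ = ∑ j, W i j * ‖u j‖ ^ 2 := by rw [hWrow i, one_mul]
    calc ∑ i, ‖∑ j, W i j • u j‖ ^ 2 ≤ ∑ i, ∑ j, W i j * ‖u j‖ ^ 2 :=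
          Finset.sum_le_sum fun i _ => step1 i
      _ = ∑ j, (∑ i, W i j) * ‖u j‖ ^ 2 := by
          rw [Finset.sum_comm]
          exact Finset.sum_congr rfl fun j _ => (Finset.sum_mul _ _ _).symm
      _ = ∑ j, ‖u j‖ ^ 2 :=
          Finset.sum_congr rfl fun j _ => by rw [hWcol j, one_mul]
  have := sqN_le_of_sq_le_sq (fun i => ∑ j, W i j • u j) u 1 zero_le_one
    (by rwa [one_pow, one_mul])
  rwa [one_mul] at this

/-- One-step tracking consensus recursion: with `x_i⁺ = ∑_j w_ij x_j^{1/2}` and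
`y_i⁺ = ∑_j w_ij (y_j + ∇f_j(x_j⁺) − ∇f_j(x_j))`, the tracking consensus error
contracts: `‖Y⁺_⊥‖ ≤ ρ ‖Y_⊥‖ + 2 ρ L_mx ‖X_⊥‖ + ρ L_mx ‖D‖`. -/
theorem stmt17 (m d : ℕ) (hm : 1 ≤ m) (hd : 1 ≤ d)
    (f : Fin m → EuclideanSpace ℝ (Fin d) → ℝ) (Lf : Fin m → ℝ)
    (hdiff : ∀ j, Differentiable ℝ (f j))
    (hlip : ∀ j, ∀ a b : EuclideanSpace ℝ (Fin d),
      ‖gradient (f j) a - gradient (f j) b‖ ≤ Lf j * ‖a - b‖)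
    (Lmx : ℝ) (hLmx : Lmx = Finset.univ.sup' ⟨⟨0, hm⟩, Finset.mem_univ _⟩ Lf)
    (W : Matrix (Fin m) (Fin m) ℝ)
    (hWnn : ∀ i j, 0 ≤ W i j)
    (hWrow : ∀ i, ∑ j, W i j = 1) (hWcol : ∀ j, ∑ i, W i j = 1)
    (ρ : ℝ)
    (hρ : ρ = ‖Matrix.toEuclideanCLM (𝕜 := ℝ) (n := Fin m)
      (W - (m : ℝ)⁻¹ • Matrix.of fun _ _ => (1 : ℝ))‖)
    (x xh y xp yp : Fin m → EuclideanSpace ℝ (Fin d))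
    (hxp : ∀ i, xp i = ∑ j, W i j • xh j)
    (hyp : ∀ i, yp i = ∑ j, W i j •
      (y j + gradient (f j) (xp j) - gradient (f j) (x j))) :
    Real.sqrt (∑ i, ‖yp i - (m : ℝ)⁻¹ • ∑ j, yp j‖ ^ 2) ≤
      ρ * Real.sqrt (∑ i, ‖y i - (m : ℝ)⁻¹ • ∑ j, y j‖ ^ 2)
      + 2 * ρ * Lmx * Real.sqrt (∑ i, ‖x i - (m : ℝ)⁻¹ • ∑ j, x j‖ ^ 2)
      + ρ * Lmx * Real.sqrt (∑ i, ‖xh i - x i‖ ^ 2) := by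
  have hm0 : (m : ℝ) ≠ 0 := Nat.cast_ne_zero.mpr (by omega)
  set Δ : Fin m → EuclideanSpace ℝ (Fin d) := fun j => gradient (f j) (xp j) - gradient (f j) (x j) with hΔ
  set ybar : EuclideanSpace ℝ (Fin d) := (m : ℝ)⁻¹ • ∑ j, y j with hybar
  set xbar : EuclideanSpace ℝ (Fin d) := (m : ℝ)⁻¹ • ∑ j, x j with hxbar
  set A : Matrix (Fin m) (Fin m) ℝ :=
    W - (m : ℝ)⁻¹ • Matrix.of (fun _ _ => (1 : ℝ)) with hA
  have hAij : ∀ i j, A i j = W i j - (m : ℝ)⁻¹ := by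
    intro i j; simp [hA, Matrix.sub_apply]
  have hArow : ∀ i, ∑ j, A i j = 0 := by
    intro i
    simp only [hAij, Finset.sum_sub_distrib, hWrow i, Finset.sum_const,
      Finset.card_univ, Fintype.card_fin, nsmul_eq_mul]
    rw [mul_inv_cancel₀ hm0, sub_self]
  -- Lipschitz constants are nonnegative
  have hLf0 : ∀ j, 0 ≤ Lf j := by
    intro j
    have h := hlip j 0 (EuclideanSpace.single ⟨0, hd⟩ (1 : ℝ))
    have hn : ‖(0 : EuclideanSpace ℝ (Fin d)) - EuclideanSpace.single ⟨0, hd⟩ (1 : ℝ)‖ = 1 := by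
      rw [zero_sub, norm_neg, EuclideanSpace.norm_single, norm_one]
    rw [hn, mul_one] at h
    exact le_trans (norm_nonneg _) h
  have hLmxge : ∀ j, Lf j ≤ Lmx := by
    intro j; rw [hLmx]; exact Finset.le_sup' Lf (Finset.mem_univ j)
  have hLmx0 : 0 ≤ Lmx := le_trans (hLf0 ⟨0, hm⟩) (hLmxge ⟨0, hm⟩)
  have hρ0 : 0 ≤ ρ := hρ ▸ norm_nonneg _
  -- generic sum manipulation lemmas
  have hAsmul : ∀ (v : Fin m → EuclideanSpace ℝ (Fin d)) (i : Fin m),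
      ∑ j, A i j • v j = (∑ j, W i j • v j) - (m : ℝ)⁻¹ • ∑ j, v j := by
    intro v i
    rw [Finset.smul_sum, ← Finset.sum_sub_distrib]
    exact Finset.sum_congr rfl fun j _ => by rw [hAij, sub_smul]
  have hAconst : ∀ (v : Fin m → EuclideanSpace ℝ (Fin d)) (c : EuclideanSpace ℝ (Fin d)) (i : Fin m),
      ∑ j, A i j • (v j + c) = ∑ j, A i j • v j := by
    intro v c i
    have h : ∑ j, A i j • (v j + c) = ∑ j, A i j • v j + (∑ j, A i j) • c := by
      rw [Finset.sum_smul, ← Finset.sum_add_distrib]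
      exact Finset.sum_congr rfl fun j _ => smul_add _ _ _
    rw [h, hArow, zero_smul, add_zero]
  -- rewrite yp in terms of y + Δ
  have hyp' : ∀ i, yp i = ∑ j, W i j • (y j + Δ j) := by
    intro i
    rw [hyp i]
    exact Finset.sum_congr rfl fun j _ => by rw [hΔ]; congr 1; abel
  have hsum_yp : ∑ j, yp j = ∑ j, (y j + Δ j) := by
    calc ∑ i, yp i = ∑ i, ∑ j, W i j • (y j + Δ j) :=
          Finset.sum_congr rfl fun i _ => hyp' i
      _ = ∑ j, ∑ i, W i j • (y j + Δ j) := Finset.sum_comm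
      _ = ∑ j, (y j + Δ j) := Finset.sum_congr rfl fun j _ => by
          rw [← Finset.sum_smul, hWcol j, one_smul]
  -- key decomposition for yp
  have key1 : ∀ i, yp i - (m : ℝ)⁻¹ • ∑ j, yp j
      = (∑ j, A i j • (y j - ybar)) + ∑ j, A i j • Δ j := by
    intro i
    have e1 : (∑ j, A i j • (y j - ybar)) + ∑ j, A i j • Δ j
        = ∑ j, A i j • ((y j + Δ j) + (-ybar)) := by
      rw [← Finset.sum_add_distrib]
      exact Finset.sum_congr rfl fun j _ => by
        rw [← smul_add]; congr 1; abel
    rw [e1, hAconst, hAsmul, ← hyp' i, ← hsum_yp]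
  -- key decomposition for xp - x
  have key2 : ∀ i, xp i - x i
      = (∑ j, W i j • (xh j - x j)) + ((∑ j, W i j • (x j - xbar)) + (-(x i - xbar))) := by
    intro i
    have h1 : ∑ j, W i j • (xh j - x j) = (∑ j, W i j • xh j) - ∑ j, W i j • x j := by
      rw [← Finset.sum_sub_distrib]
      exact Finset.sum_congr rfl fun j _ => smul_sub _ _ _
    have h2 : ∑ j, W i j • (x j - xbar) = (∑ j, W i j • x j) - xbar := by
      have : ∑ j, W i j • (x j - xbar) = (∑ j, W i j • x j) - (∑ j, W i j) • xbar := by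
        rw [Finset.sum_smul, ← Finset.sum_sub_distrib]
        exact Finset.sum_congr rfl fun j _ => smul_sub _ _ _
      rw [this, hWrow i, one_smul]
    rw [hxp i, h1, h2]
    abel
  -- bound: sqN Δ ≤ Lmx * sqN (xp - x)
  have hNΔ : sqN Δ ≤ Lmx * sqN (fun i => xp i - x i) := by
    apply sqN_le_of_sq_le_sq _ _ _ hLmx0
    rw [Finset.mul_sum]
    apply Finset.sum_le_sum
    intro j _
    have h1 : ‖Δ j‖ ≤ Lmx * ‖xp j - x j‖ :=
      le_trans (hlip j (xp j) (x j))
        (mul_le_mul_of_nonneg_right (hLmxge j) (norm_nonneg _))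
    calc ‖Δ j‖ ^ 2 ≤ (Lmx * ‖xp j - x j‖) ^ 2 :=
          pow_le_pow_left₀ (norm_nonneg _) h1 2
      _ = Lmx ^ 2 * ‖xp j - x j‖ ^ 2 := by ring
  -- bound: sqN (xp - x) ≤ sqN (xh - x) + 2 * sqN (x - xbar)
  have hNxpx : sqN (fun i => xp i - x i)
      ≤ sqN (fun i => xh i - x i) + 2 * sqN (fun i => x i - xbar) := by
    have e : sqN (fun i => xp i - x i) = sqN (fun i =>
        (∑ j, W i j • (xh j - x j)) + ((∑ j, W i j • (x j - xbar)) + (-(x i - xbar)))) := by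
      congr 1; funext i; exact key2 i
    rw [e]
    calc sqN (fun i => (∑ j, W i j • (xh j - x j))
          + ((∑ j, W i j • (x j - xbar)) + (-(x i - xbar))))
        ≤ sqN (fun i => ∑ j, W i j • (xh j - x j))
          + sqN (fun i => (∑ j, W i j • (x j - xbar)) + (-(x i - xbar))) :=
          sqN_add _ _
      _ ≤ sqN (fun i => ∑ j, W i j • (xh j - x j))
          + (sqN (fun i => ∑ j, W i j • (x j - xbar)) + sqN (fun i => -(x i - xbar))) := by
          have := sqN_add (fun i => ∑ j, W i j • (x j - xbar)) (fun i => -(x i - xbar))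
          linarith
      _ ≤ sqN (fun i => xh i - x i) + (sqN (fun i => x i - xbar) + sqN (fun i => x i - xbar)) := by
          have t1 := sqN_stoch W hWnn hWrow hWcol (fun j => xh j - x j)
          have t2 := sqN_stoch W hWnn hWrow hWcol (fun j => x j - xbar)
          have t3 : sqN (fun i => -(x i - xbar)) = sqN (fun i => x i - xbar) :=
            sqN_neg _
          linarith
      _ = sqN (fun i => xh i - x i) + 2 * sqN (fun i => x i - xbar) := by ring
  -- main chain
  have main : sqN (fun i => yp i - (m : ℝ)⁻¹ • ∑ j, yp j)
      ≤ ρ * sqN (fun i => y i - ybar)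
        + ρ * (Lmx * (sqN (fun i => xh i - x i) + 2 * sqN (fun i => x i - xbar))) := by
    have e : sqN (fun i => yp i - (m : ℝ)⁻¹ • ∑ j, yp j)
        = sqN (fun i => (∑ j, A i j • (y j - ybar)) + ∑ j, A i j • Δ j) := by
      congr 1; funext i; exact key1 i
    have t1 : sqN (fun i => ∑ j, A i j • (y j - ybar)) ≤ ρ * sqN (fun i => y i - ybar) := by
      rw [hρ]; exact sqN_opNorm A _
    have t2 : sqN (fun i => ∑ j, A i j • Δ j) ≤ ρ * sqN Δ := by
      rw [hρ]; exact sqN_opNorm A Δ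
    have t3 : ρ * sqN Δ ≤ ρ * (Lmx * sqN (fun i => xp i - x i)) :=
      mul_le_mul_of_nonneg_left hNΔ hρ0
    have t4 : ρ * (Lmx * sqN (fun i => xp i - x i))
        ≤ ρ * (Lmx * (sqN (fun i => xh i - x i) + 2 * sqN (fun i => x i - xbar))) :=
      mul_le_mul_of_nonneg_left
        (mul_le_mul_of_nonneg_left hNxpx hLmx0) hρ0
    calc sqN (fun i => yp i - (m : ℝ)⁻¹ • ∑ j, yp j)
        ≤ sqN (fun i => ∑ j, A i j • (y j - ybar))
          + sqN (fun i => ∑ j, A i j • Δ j) := e ▸ sqN_add _ _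
      _ ≤ ρ * sqN (fun i => y i - ybar) + ρ * sqN Δ := add_le_add t1 t2
      _ ≤ ρ * sqN (fun i => y i - ybar)
          + ρ * (Lmx * (sqN (fun i => xh i - x i) + 2 * sqN (fun i => x i - xbar))) := by
          linarith
  have goal_eq : Real.sqrt (∑ i, ‖yp i - (m : ℝ)⁻¹ • ∑ j, yp j‖ ^ 2)
      = sqN (fun i => yp i - (m : ℝ)⁻¹ • ∑ j, yp j) := rfl
  have g1 : Real.sqrt (∑ i, ‖y i - (m : ℝ)⁻¹ • ∑ j, y j‖ ^ 2)
      = sqN (fun i => y i - ybar) := rfl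
  have g2 : Real.sqrt (∑ i, ‖x i - (m : ℝ)⁻¹ • ∑ j, x j‖ ^ 2)
      = sqN (fun i => x i - xbar) := rfl
  have g3 : Real.sqrt (∑ i, ‖xh i - x i‖ ^ 2) = sqN (fun i => xh i - x i) := rfl
  rw [goal_eq, g1, g2, g3]
  linarith
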